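/- Let 𝒢(0,∞) be the class of GG-convex, proper, lower semicontinuous functions f : (0,∞) → [0,∞]. A one-to-one map T : 𝒢(0,∞) → 𝒢(0,∞) satisfies (a) T(T(f)) = f for every f ∈ 𝒢(0,∞) and (b) f ≥ g implies T(f) ≤ T(g) for all f, g ∈ 𝒢(0,∞), if and only if there exist constants A > 0, B > 0 and C ∈ ℝ such that (T(f))(x) = A · x^{log B} · f^◇(B·x^C) for every f ∈ 𝒢(0,∞) and x ∈ (0,∞). -/

import Mathlib

open Real Set ENNReal

/-- The positive half-line `(0,∞)` as a type. -/
abbrev Rpos : Type := {x : ℝ // 0 < x}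

/-- Multiplication on `[0,∞]` with the convention `0 · ∞ = ∞`. -/
noncomputable def gmul (a b : ℝ≥0∞) : ℝ≥0∞ :=
  if (a = 0 ∧ b = ⊤) ∨ (a = ⊤ ∧ b = 0) then ⊤ else a * b

/-- The geometric combination `x^λ · y^(1-λ)` of two points of `(0,∞)`. -/
noncomputable def gcomb (x y : Rpos) (l : ℝ) : Rpos :=
  ⟨x.1 ^ l * y.1 ^ (1 - l),
    mul_pos (Real.rpow_pos_of_pos x.2 l) (Real.rpow_pos_of_pos y.2 (1 - l))⟩

/-- `f : (0,∞) → [0,∞]` is GG-convex: `f (x^λ y^(1-λ)) ≤ f x ^ λ · f y ^ (1-λ)`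
for `λ ∈ (0,1)`, with the convention `0 · ∞ = ∞`. -/
def GGConvexP (f : Rpos → ℝ≥0∞) : Prop :=
  ∀ x y : Rpos, ∀ l ∈ Set.Ioo (0 : ℝ) 1,
    f (gcomb x y l) ≤ gmul (f x ^ l) (f y ^ (1 - l))

/-- `f : (0,∞) → [0,∞]` is proper: positive everywhere with nonempty effective domain. -/
def ProperP (f : Rpos → ℝ≥0∞) : Prop :=
  (∀ x, 0 < f x) ∧ ∃ x, f x < ⊤

/-- The class `𝒢(0,∞)` of GG-convex, proper, lower semicontinuous functions
`(0,∞) → [0,∞]`. -/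
def Gclass : Set (Rpos → ℝ≥0∞) :=
  {f | GGConvexP f ∧ ProperP f ∧ LowerSemicontinuous f}

/-- The GG-convex conjugate `f^◇(y) = sup_{x>0} exp(log x · log y) / f x`,
with the conventions `1/0 = ∞`, `1/∞ = 0` (realized by `ℝ≥0∞` division). -/
noncomputable def diamondP (f : Rpos → ℝ≥0∞) : Rpos → ℝ≥0∞ := fun y =>
  ⨆ x : Rpos, ENNReal.ofReal (Real.exp (Real.log x.1 * Real.log y.1)) / f x
section Basics

/-! ### Basic objects: `EP`, `lg`, `ex`, powers and deltas -/

noncomputable def EP (r : ℝ) : ℝ≥0∞ := ENNReal.ofReal (Real.exp r)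

noncomputable def lg (x : Rpos) : ℝ := Real.log x.1

noncomputable def ex (t : ℝ) : Rpos := ⟨Real.exp t, Real.exp_pos t⟩

lemma EP_pos (r : ℝ) : 0 < EP r := ENNReal.ofReal_pos.2 (Real.exp_pos r)

lemma EP_ne_zero (r : ℝ) : EP r ≠ 0 := (EP_pos r).ne'

lemma EP_ne_top (r : ℝ) : EP r ≠ ⊤ := ENNReal.ofReal_ne_top

lemma EP_lt_top (r : ℝ) : EP r < ⊤ := ENNReal.ofReal_lt_top

lemma EP_add (r s : ℝ) : EP (r + s) = EP r * EP s := by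
  rw [EP, Real.exp_add, ENNReal.ofReal_mul (Real.exp_pos r).le]; rfl

lemma EP_le_EP_iff {r s : ℝ} : EP r ≤ EP s ↔ r ≤ s := by
  rw [EP, EP, ENNReal.ofReal_le_ofReal_iff (Real.exp_pos s).le, Real.exp_le_exp]

lemma EP_lt_EP_iff {r s : ℝ} : EP r < EP s ↔ r < s := by
  rw [EP, EP, ENNReal.ofReal_lt_ofReal_iff (Real.exp_pos s), Real.exp_lt_exp]

lemma EP_inj {r s : ℝ} (h : EP r = EP s) : r = s :=
  le_antisymm (EP_le_EP_iff.1 h.le) (EP_le_EP_iff.1 h.ge)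

lemma EP_inv (r : ℝ) : (EP r)⁻¹ = EP (-r) := by
  rw [EP, EP, ← ENNReal.ofReal_inv_of_pos (Real.exp_pos r), ← Real.exp_neg]

lemma EP_rpow (r s : ℝ) : EP r ^ s = EP (r * s) := by
  rw [EP, EP, ENNReal.ofReal_rpow_of_pos (Real.exp_pos r), ← Real.exp_mul, mul_comm]

lemma EP_div (r s : ℝ) : EP r / EP s = EP (r - s) := by
  rw [div_eq_mul_inv, EP_inv, ← EP_add]; ring_nf

lemma EP_mul_top (r : ℝ) : EP r * ⊤ = ⊤ := ENNReal.mul_top (EP_ne_zero r)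

lemma EP_log_toReal {a : ℝ≥0∞} (h0 : a ≠ 0) (ht : a ≠ ⊤) :
    EP (Real.log a.toReal) = a := by
  rw [EP, Real.exp_log (ENNReal.toReal_pos h0 ht), ENNReal.ofReal_toReal ht]

lemma lg_ex (t : ℝ) : lg (ex t) = t := Real.log_exp t

lemma ex_lg (x : Rpos) : ex (lg x) = x := Subtype.ext (Real.exp_log x.2)

lemma ex_inj {s t : ℝ} (h : ex s = ex t) : s = t := by
  have := congrArg lg h; rwa [lg_ex, lg_ex] at this

lemma lg_surj : Function.Surjective lg := fun t => ⟨ex t, lg_ex t⟩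

lemma gcomb_ex (s t l : ℝ) : gcomb (ex s) (ex t) l = ex (l * s + (1 - l) * t) := by
  apply Subtype.ext
  show Real.exp s ^ l * Real.exp t ^ (1 - l) = Real.exp (l * s + (1 - l) * t)
  rw [← Real.exp_mul, ← Real.exp_mul, ← Real.exp_add, mul_comm s l, mul_comm t (1-l)]

lemma lg_gcomb (x y : Rpos) (l : ℝ) : lg (gcomb x y l) = l * lg x + (1 - l) * lg y := by
  rw [← ex_lg x, ← ex_lg y, gcomb_ex, lg_ex, lg_ex, lg_ex]

lemma gmul_of_ne {a b : ℝ≥0∞} (ha : a ≠ 0) (hb : b ≠ 0) : gmul a b = a * b := by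
  rw [gmul, if_neg]; rintro (⟨h, -⟩ | ⟨-, h⟩) <;> [exact ha h; exact hb h]

lemma le_gmul {a b : ℝ≥0∞} (ha : a ≠ 0) (hb : b ≠ 0) {c : ℝ≥0∞} (h : c ≤ a * b) :
    c ≤ gmul a b := by rw [gmul_of_ne ha hb]; exact h

/-- The power function `x ↦ e^b · x^p`. -/
noncomputable def pw (b p : ℝ) : Rpos → ℝ≥0∞ := fun x => EP (b + p * lg x)

/-- The "delta" function equal to `e^c` at `y` and `∞` elsewhere. -/
noncomputable def dl (y : Rpos) (c : ℝ) : Rpos → ℝ≥0∞ := fun x =>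
  if x = y then EP c else ⊤

lemma continuous_lg : Continuous lg := by
  refine Real.continuousOn_log.comp_continuous continuous_subtype_val fun x => ?_
  exact Set.mem_compl_singleton_iff.2 x.2.ne'

lemma continuous_EP_comp {g : Rpos → ℝ} (hg : Continuous g) :
    Continuous fun x => EP (g x) :=
  ENNReal.continuous_ofReal.comp (Real.continuous_exp.comp hg)

lemma pw_mem (b p : ℝ) : pw b p ∈ Gclass := by
  refine ⟨?_, ⟨fun x => EP_pos _, ⟨ex 0, EP_lt_top _⟩⟩, ?_⟩
  · intro x y l hl
    have key : pw b p (gcomb x y l) = gmul (pw b p x ^ l) (pw b p y ^ (1 - l)) := by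
      rw [gmul_of_ne (by rw [pw, EP_rpow]; exact EP_ne_zero _)
        (by rw [pw, EP_rpow]; exact EP_ne_zero _)]
      show EP (b + p * lg (gcomb x y l)) = EP (b + p * lg x) ^ l * EP (b + p * lg y) ^ (1 - l)
      rw [EP_rpow, EP_rpow, ← EP_add, lg_gcomb]; ring_nf
    exact key.le
  · exact (continuous_EP_comp (by
      exact continuous_const.add (continuous_const.mul continuous_lg))).lowerSemicontinuous

lemma dl_apply_self (y : Rpos) (c : ℝ) : dl y c y = EP c := if_pos rfl

lemma dl_apply_ne {y : Rpos} (c : ℝ) {x : Rpos} (h : x ≠ y) : dl y c x = ⊤ := if_neg h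

lemma dl_pos (y : Rpos) (c : ℝ) (x : Rpos) : 0 < dl y c x := by
  rw [dl]; split
  · exact EP_pos c
  · exact ENNReal.zero_lt_top

lemma dl_rpow_ne_zero (y : Rpos) (c : ℝ) (w : Rpos) {l : ℝ} (hl : 0 < l) :
    dl y c w ^ l ≠ 0 := by
  rw [dl]; split
  · rw [EP_rpow]; exact EP_ne_zero _
  · rw [ENNReal.top_rpow_of_pos hl]; exact top_ne_zero

lemma dl_mem (y : Rpos) (c : ℝ) : dl y c ∈ Gclass := by
  refine ⟨?_, ⟨dl_pos y c, ⟨y, by rw [dl_apply_self]; exact EP_lt_top c⟩⟩, ?_⟩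
  · intro x z l hl
    have ha := dl_rpow_ne_zero y c x hl.1
    have hb := dl_rpow_ne_zero y c z (by linarith [hl.2] : (0:ℝ) < 1 - l)
    rw [gmul_of_ne ha hb]
    by_cases hx : x = y
    · by_cases hz : z = y
      · have hg : gcomb x z l = y := by
          rw [hx, hz]
          apply Subtype.ext
          show y.1 ^ l * y.1 ^ (1 - l) = y.1
          rw [← Real.rpow_add y.2]; norm_num
        rw [hg, dl_apply_self, hx, hz, dl_apply_self, EP_rpow, EP_rpow, ← EP_add]
        apply EP_le_EP_iff.2; ring_nf; exact le_refl _
      · rw [dl_apply_ne c hz, ENNReal.top_rpow_of_pos (by linarith [hl.2] : (0:ℝ) < 1 - l),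
          ENNReal.mul_top ha]
        exact le_top
    · rw [dl_apply_ne c hx, ENNReal.top_rpow_of_pos hl.1, ENNReal.top_mul hb]
      exact le_top
  · intro x₀ c' hc'
    rcases eq_or_ne x₀ y with rfl | hx
    · exact Filter.Eventually.of_forall fun x => lt_of_lt_of_le (by rwa [dl_apply_self] at hc')
        (by rw [dl]; split; exacts [le_refl _, le_top])
    · have : {x : Rpos | x ≠ y} ∈ nhds x₀ := isOpen_ne.mem_nhds hx
      exact Filter.eventually_of_mem this fun x hx' => by
        show dl y c x > c'
        rw [dl_apply_ne _ hx']
        exact lt_of_lt_of_le hc' le_top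

end Basics
section OrderLemmas

instance : Nonempty Rpos := ⟨ex 0⟩

lemma affine_le_affine_iff {b p b' p' : ℝ} :
    (∀ t : ℝ, b + p * t ≤ b' + p' * t) ↔ p = p' ∧ b ≤ b' := by
  constructor
  · intro h
    have hp : p = p' := by
      by_contra hne
      have key : (p - p') * ((b' - b + 1) / (p - p')) = b' - b + 1 :=
        mul_div_cancel₀ _ (sub_ne_zero.2 hne)
      linarith [h ((b' - b + 1) / (p - p'))]
    refine ⟨hp, ?_⟩
    have := h 0; simpa using this
  · rintro ⟨rfl, hb⟩ t
    linarith

lemma pw_le_pw_iff {b p b' p' : ℝ} : pw b p ≤ pw b' p' ↔ p = p' ∧ b ≤ b' := by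
  constructor
  · intro h
    refine affine_le_affine_iff.1 fun t => ?_
    have := h (ex t)
    rwa [pw, pw, lg_ex, EP_le_EP_iff] at this
  · rintro ⟨rfl, hb⟩ x
    exact EP_le_EP_iff.2 (by linarith)

lemma pw_inj {b p b' p' : ℝ} (h : pw b p = pw b' p') : b = b' ∧ p = p' := by
  have h1 := pw_le_pw_iff.1 h.le
  have h2 := pw_le_pw_iff.1 h.ge
  exact ⟨le_antisymm h1.2 h2.2, h1.1⟩

lemma dl_inj {y y' : Rpos} {c c' : ℝ} (h : dl y c = dl y' c') : y = y' ∧ c = c' := by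
  have hy : y = y' := by
    by_contra hne
    have := congrFun h y
    rw [dl_apply_self, dl_apply_ne _ hne] at this
    exact EP_ne_top c this
  subst hy
  have := congrFun h y
  rw [dl_apply_self, dl_apply_self] at this
  exact ⟨rfl, EP_inj this⟩

lemma le_dl_iff {f : Rpos → ℝ≥0∞} {y : Rpos} {c : ℝ} : f ≤ dl y c ↔ f y ≤ EP c := by
  constructor
  · intro h; have := h y; rwa [dl_apply_self] at this
  · intro h x
    rcases eq_or_ne x y with rfl | hx
    · rwa [dl_apply_self]
    · rw [dl_apply_ne _ hx]; exact le_top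

lemma dl_le_dl_iff {y y' : Rpos} {c c' : ℝ} : dl y c ≤ dl y' c' ↔ y = y' ∧ c ≤ c' := by
  constructor
  · intro h
    have hy : y = y' := by
      by_contra hne
      have := le_dl_iff.1 h
      rw [dl_apply_ne _ (fun h' => hne h'.symm)] at this
      exact EP_ne_top c' (top_le_iff.1 this)
    subst hy
    have := le_dl_iff.1 h
    rw [dl_apply_self] at this
    exact ⟨rfl, EP_le_EP_iff.1 this⟩
  · rintro ⟨rfl, hc⟩
    exact le_dl_iff.2 (by rw [dl_apply_self]; exact EP_le_EP_iff.2 hc)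

lemma pw_le_dl_iff {b p : ℝ} {y : Rpos} {c : ℝ} :
    pw b p ≤ dl y c ↔ b + p * lg y ≤ c := by
  rw [le_dl_iff, pw, EP_le_EP_iff]

lemma rpos_exists_ne (y : Rpos) : ∃ x : Rpos, x ≠ y := by
  rcases eq_or_ne y (ex 0) with rfl | h
  · exact ⟨ex 1, fun h => by simpa using ex_inj h⟩
  · exact ⟨ex 0, fun h' => h h'.symm⟩

lemma not_dl_le_pw {y : Rpos} {c b p : ℝ} : ¬ dl y c ≤ pw b p := by
  intro h
  obtain ⟨x, hx⟩ := rpos_exists_ne y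
  have := h x
  rw [dl_apply_ne _ hx] at this
  exact EP_ne_top _ (top_le_iff.1 this)

end OrderLemmas

section DiamondLemmas

lemma diamond_apply (f : Rpos → ℝ≥0∞) (y : Rpos) :
    diamondP f y = ⨆ x : Rpos, EP (lg x * lg y) / f x := rfl

lemma eq_top_of_EP_le {S : ℝ≥0∞} (h : ∀ r : ℝ, EP r ≤ S) : S = ⊤ := by
  refine top_le_iff.1 ?_
  rw [← ENNReal.iSup_natCast]
  refine iSup_le fun n => ?_
  calc (n : ℝ≥0∞) = ENNReal.ofReal n := (ENNReal.ofReal_natCast n).symm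
    _ ≤ EP n := by
        rw [EP]
        exact ENNReal.ofReal_le_ofReal (le_trans (le_add_of_nonneg_right zero_le_one)
          (Real.add_one_le_exp _))
    _ ≤ S := h n

lemma diamond_pos {f : Rpos → ℝ≥0∞} (hf : f ∈ Gclass) (y : Rpos) : 0 < diamondP f y := by
  obtain ⟨x, hx⟩ := hf.2.1.2
  refine lt_of_lt_of_le ?_ (le_iSup _ x)
  exact ENNReal.div_pos (EP_ne_zero _) hx.ne

lemma diamond_dl (y : Rpos) (c : ℝ) (z : Rpos) :
    diamondP (dl y c) z = EP (lg y * lg z - c) := by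
  rw [diamond_apply]
  apply le_antisymm
  · refine iSup_le fun x => ?_
    rcases eq_or_ne x y with rfl | hx
    · rw [dl_apply_self, EP_div]
    · rw [dl_apply_ne _ hx, ENNReal.div_top]
      exact zero_le
  · refine le_trans ?_ (le_iSup _ y)
    rw [dl_apply_self, EP_div]

lemma diamond_pw (b q : ℝ) (z : Rpos) :
    diamondP (pw b q) z = if lg z = q then EP (-b) else ⊤ := by
  have hterm : ∀ x : Rpos, EP (lg x * lg z) / pw b q x = EP (lg x * (lg z - q) - b) := by
    intro x
    rw [pw, EP_div]; congr 1; ring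
  rw [diamond_apply]
  split
  · next h =>
    apply le_antisymm
    · refine iSup_le fun x => ?_
      rw [hterm, h]; exact EP_le_EP_iff.2 (le_of_eq (by ring))
    · refine le_trans ?_ (le_iSup _ (ex 0))
      rw [hterm, h, lg_ex]; exact EP_le_EP_iff.2 (le_of_eq (by ring))
  · next h =>
    apply eq_top_of_EP_le
    intro r
    refine le_trans ?_ (le_iSup _ (ex ((r + b) / (lg z - q))))
    rw [hterm, lg_ex, div_mul_cancel₀ _ (sub_ne_zero.2 h)]
    exact EP_le_EP_iff.2 (by linarith)

lemma pw_le_f_iff {f : Rpos → ℝ≥0∞} {b p : ℝ} :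
    pw b p ≤ f ↔ diamondP f (ex p) ≤ EP (-b) := by
  rw [diamond_apply]
  constructor
  · intro h
    refine iSup_le fun x => ?_
    rw [lg_ex, ENNReal.div_le_iff_le_mul (Or.inr (EP_ne_top _)) (Or.inr (EP_ne_zero _))]
    calc EP (lg x * p) = EP (-b) * EP (b + p * lg x) := by rw [← EP_add]; congr 1; ring
      _ ≤ EP (-b) * f x := by exact mul_le_mul_right (h x) _
  · intro h x
    have hx := le_trans (le_iSup _ x) h
    rw [lg_ex, ENNReal.div_le_iff_le_mul (Or.inr (EP_ne_top _)) (Or.inr (EP_ne_zero _))] at hx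
    calc pw b p x = EP b * EP (lg x * p) := by rw [pw, ← EP_add]; congr 1; ring
      _ ≤ EP b * (EP (-b) * f x) := mul_le_mul_right hx _
      _ = f x := by
          rw [← mul_assoc, ← EP_add, add_neg_cancel]
          simp [EP, Real.exp_zero]

lemma diamond_antitone {f g : Rpos → ℝ≥0∞} (h : f ≤ g) : diamondP g ≤ diamondP f := by
  intro y
  exact iSup_mono fun x => ENNReal.div_le_div_left (h x) _

end DiamondLemmas
section Core

variable {f : Rpos → ℝ≥0∞}

/-- The logarithmic epigraph of `f`. -/
def epiS (f : Rpos → ℝ≥0∞) : Set (ℝ × ℝ) := {p | f (ex p.1) ≤ EP p.2}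

lemma continuous_ex : Continuous ex := Continuous.subtype_mk Real.continuous_exp _

lemma epiS_convex (hf : f ∈ Gclass) : Convex ℝ (epiS f) := by
  rintro ⟨t₁, r₁⟩ h₁ ⟨t₂, r₂⟩ h₂ la lb hla hlb hlab
  rcases eq_or_lt_of_le hla with h0 | hla'
  · have : lb = 1 := by linarith
    simp only [← h0, this, Prod.smul_mk, smul_eq_mul, zero_mul, one_mul, Prod.mk_add_mk,
      zero_add]
    exact h₂
  rcases eq_or_lt_of_le hlb with h0 | hlb'
  · have : la = 1 := by linarith
    simp only [← h0, this, Prod.smul_mk, smul_eq_mul, zero_mul, one_mul, Prod.mk_add_mk,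
      add_zero]
    exact h₁
  have hlb1 : lb = 1 - la := by linarith
  subst hlb1
  have hgc : ex (la * t₁ + (1 - la) * t₂) = gcomb (ex t₁) (ex t₂) la := by
    rw [gcomb_ex]
  show f (ex (la * t₁ + (1 - la) * t₂)) ≤ EP (la * r₁ + (1 - la) * r₂)
  have hgg := hf.1 (ex t₁) (ex t₂) la ⟨hla', by linarith⟩
  rw [← hgc] at hgg
  refine le_trans hgg ?_
  have hz1 : f (ex t₁) ^ la ≠ 0 := fun h =>
    (hf.2.1.1 _).ne' ((ENNReal.rpow_eq_zero_iff_of_pos hla').1 h)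
  have hz2 : f (ex t₂) ^ (1 - la) ≠ 0 := fun h =>
    (hf.2.1.1 _).ne' ((ENNReal.rpow_eq_zero_iff_of_pos (by linarith)).1 h)
  rw [gmul_of_ne hz1 hz2]
  calc f (ex t₁) ^ la * f (ex t₂) ^ (1 - la)
      ≤ EP r₁ ^ la * EP r₂ ^ (1 - la) :=
        mul_le_mul' (ENNReal.rpow_le_rpow h₁ hla) (ENNReal.rpow_le_rpow h₂ (by linarith))
    _ = EP (la * r₁ + (1 - la) * r₂) := by
        rw [EP_rpow, EP_rpow, ← EP_add]; congr 1; ring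

lemma lsc_comp (hf : f ∈ Gclass) : LowerSemicontinuous fun q : ℝ × ℝ => f (ex q.1) :=
  LowerSemicontinuous.comp hf.2.2 (continuous_ex.comp continuous_fst)

lemma epiS_closed (hf : f ∈ Gclass) : IsClosed (epiS f) := by
  rw [← isOpen_compl_iff]
  rw [isOpen_iff_forall_mem_open]
  rintro ⟨t₀, r₀⟩ hp₀
  have hlt : EP r₀ < f (ex t₀) := lt_of_not_ge hp₀
  obtain ⟨c, hc1, hc2⟩ := exists_between hlt
  have hc0 : c ≠ 0 := fun h => absurd hc1 (by simp [h])
  have hctop : c ≠ ⊤ := (lt_of_lt_of_le hc2 le_top).ne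
  set ρ := Real.log c.toReal with hρ
  have hEρ : EP ρ = c := EP_log_toReal hc0 hctop
  refine ⟨{q : ℝ × ℝ | q.2 < ρ} ∩ ((fun q : ℝ × ℝ => f (ex q.1)) ⁻¹' Set.Ioi (EP ρ)),
    ?_, ?_, ?_⟩
  · rintro ⟨t, r⟩ ⟨h1, h2⟩
    simp only [Set.mem_compl_iff, epiS, Set.mem_setOf_eq, not_le]
    calc EP r < EP ρ := EP_lt_EP_iff.2 h1
      _ < f (ex t) := h2
  · exact ((isOpen_lt continuous_snd continuous_const).inter
      ((lowerSemicontinuous_iff_isOpen_preimage.1 (lsc_comp hf)) (EP ρ)))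
  · exact ⟨by simp only [Set.mem_setOf_eq]; exact EP_lt_EP_iff.1 (hEρ ▸ hc1), by
      simpa [Set.mem_preimage, hEρ] using hc2⟩

end Core
section Separation

variable {f : Rpos → ℝ≥0∞}

lemma mem_epiS_of_ne_top {x : Rpos} (hne : f x ≠ ⊤) (h0 : f x ≠ 0) :
    (lg x, Real.log (f x).toReal) ∈ epiS f := by
  show f (ex (lg x)) ≤ EP (Real.log (f x).toReal)
  rw [ex_lg, EP_log_toReal h0 hne]

lemma sep_core (hf : f ∈ Gclass) {t₀ ρ : ℝ} (h : (t₀, ρ) ∉ epiS f) :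
    ∃ α γ u : ℝ, γ ≤ 0 ∧ (∀ q ∈ epiS f, α * q.1 + γ * q.2 < u) ∧
      u < α * t₀ + γ * ρ := by
  obtain ⟨φ, u, hS, hp⟩ :=
    geometric_hahn_banach_closed_point (epiS_convex hf) (epiS_closed hf) h
  have hlin : ∀ q : ℝ × ℝ, φ q = φ (1, 0) * q.1 + φ (0, 1) * q.2 := by
    intro q
    have hq : q = q.1 • ((1:ℝ), (0:ℝ)) + q.2 • ((0:ℝ), (1:ℝ)) := by
      ext <;> simp
    calc φ q = φ (q.1 • ((1:ℝ), (0:ℝ)) + q.2 • ((0:ℝ), (1:ℝ))) := by rw [← hq]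
      _ = q.1 * φ (1, 0) + q.2 * φ (0, 1) := by
          rw [map_add, map_smul, map_smul, smul_eq_mul, smul_eq_mul]
      _ = φ (1, 0) * q.1 + φ (0, 1) * q.2 := by ring
  refine ⟨φ (1, 0), φ (0, 1), u, ?_, fun q hq => by rw [← hlin]; exact hS q hq, ?_⟩
  case refine_2 =>
    have h2 := hp
    rw [hlin (t₀, ρ)] at h2
    simpa using h2
  by_contra hγ
  push_neg at hγ
  obtain ⟨x₁, hx₁⟩ := hf.2.1.2
  have hmem : ∀ n : ℕ, (lg x₁, Real.log (f x₁).toReal + n) ∈ epiS f := by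
    intro n
    show f (ex (lg x₁)) ≤ EP (Real.log (f x₁).toReal + n)
    rw [ex_lg]
    calc f x₁ = EP (Real.log (f x₁).toReal) := (EP_log_toReal (hf.2.1.1 x₁).ne' hx₁.ne).symm
      _ ≤ _ := EP_le_EP_iff.2 (le_add_of_nonneg_right (Nat.cast_nonneg n))
  obtain ⟨n, hn⟩ := exists_nat_gt ((u - φ (1, 0) * lg x₁ - φ (0, 1) * Real.log (f x₁).toReal)
    / φ (0, 1))
  have h1 := hS _ (hmem n)
  rw [hlin] at h1
  simp only at h1
  have h2 : (u - φ (1, 0) * lg x₁ - φ (0, 1) * Real.log (f x₁).toReal) < (n : ℝ) * φ (0, 1) :=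
    (div_lt_iff₀ hγ).1 hn
  nlinarith [h1, h2]

lemma minorant_of_sep {α γ u : ℝ} (hf : f ∈ Gclass) (hγ : γ < 0)
    (hS : ∀ q ∈ epiS f, α * q.1 + γ * q.2 < u) :
    pw (u / γ) (-(α / γ)) ≤ f := by
  intro x
  rcases eq_or_ne (f x) ⊤ with htop | hne
  · rw [htop]; exact le_top
  have hmem := mem_epiS_of_ne_top hne (hf.2.1.1 x).ne'
  have h1 := hS _ hmem
  simp only at h1
  have key : u / γ + -(α / γ) * lg x < Real.log (f x).toReal := by
    have h2 : u / γ + -(α / γ) * lg x = (u - α * lg x) / γ := by ring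
    rw [h2, div_lt_iff_of_neg hγ]
    have h3 := mul_comm γ (Real.log (f x).toReal)
    linarith
  calc pw (u / γ) (-(α / γ)) x = EP (u / γ + -(α / γ) * lg x) := rfl
    _ ≤ EP (Real.log (f x).toReal) := EP_le_EP_iff.2 key.le
    _ = f x := EP_log_toReal (hf.2.1.1 x).ne' hne

lemma exists_power_le (hf : f ∈ Gclass) : ∃ b p : ℝ, pw b p ≤ f := by
  obtain ⟨x₁, hx₁⟩ := hf.2.1.2
  obtain ⟨c, hc1, hc2⟩ := exists_between (hf.2.1.1 x₁)
  have hc0 : c ≠ 0 := hc1.ne'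
  have hctop : c ≠ ⊤ := (hc2.trans_le le_top).ne
  have hnm : (lg x₁, Real.log c.toReal) ∉ epiS f := by
    show ¬ f (ex (lg x₁)) ≤ EP (Real.log c.toReal)
    rw [ex_lg, EP_log_toReal hc0 hctop]
    exact not_le.2 hc2
  obtain ⟨α, γ, u, hγ0, hS, hp⟩ := sep_core hf hnm
  rcases lt_or_eq_of_le hγ0 with hγ | hγ
  · exact ⟨_, _, minorant_of_sep hf hγ hS⟩
  · exfalso
    have hmem := mem_epiS_of_ne_top hx₁.ne (hf.2.1.1 x₁).ne'
    have h1 := hS _ hmem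
    simp only at h1
    rw [hγ] at h1 hp
    simp only [zero_mul, add_zero] at h1 hp
    linarith

lemma exists_power_lt (hf : f ∈ Gclass) (x₀ : Rpos) {r : ℝ≥0∞} (hr : r < f x₀) :
    ∃ b p : ℝ, pw b p ≤ f ∧ r < pw b p x₀ := by
  obtain ⟨c, hc1, hc2⟩ := exists_between hr
  have hc0 : c ≠ 0 := fun h => absurd hc1 (by simp [h])
  have hctop : c ≠ ⊤ := (hc2.trans_le le_top).ne
  set ρ := Real.log c.toReal with hρdef
  have hEρ : EP ρ = c := EP_log_toReal hc0 hctop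
  have hnm : (lg x₀, ρ) ∉ epiS f := by
    show ¬ f (ex (lg x₀)) ≤ EP ρ
    rw [ex_lg, hEρ]
    exact not_le.2 hc2
  obtain ⟨α, γ, u, hγ0, hS, hp⟩ := sep_core hf hnm
  rcases lt_or_eq_of_le hγ0 with hγ | hγ
  · refine ⟨u / γ, -(α / γ), minorant_of_sep hf hγ hS, ?_⟩
    have key : ρ < u / γ + -(α / γ) * lg x₀ := by
      have h2 : u / γ + -(α / γ) * lg x₀ = (u - α * lg x₀) / γ := by ring
      rw [h2, lt_div_iff_of_neg hγ]
      have h3 := mul_comm γ ρ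
      linarith
    calc r < EP ρ := hEρ ▸ hc1
      _ < EP (u / γ + -(α / γ) * lg x₀) := EP_lt_EP_iff.2 key
      _ = pw (u / γ) (-(α / γ)) x₀ := rfl
  · obtain ⟨b₀, p₀, hmin⟩ := exists_power_le hf
    rw [hγ] at hS hp
    simp only [zero_mul, add_zero] at hS hp
    set δ := α * lg x₀ - u with hδdef
    have hδ : 0 < δ := by simp only [hδdef]; linarith
    have hrtop : r ≠ ⊤ := (hr.trans_le le_top).ne
    have hr' : r < EP (Real.log (r.toReal + 1)) := by
      rw [EP, Real.exp_log (by positivity)]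
      calc r = ENNReal.ofReal r.toReal := (ENNReal.ofReal_toReal hrtop).symm
        _ < ENNReal.ofReal (r.toReal + 1) := by
            rw [ENNReal.ofReal_lt_ofReal_iff (by positivity)]
            exact lt_add_one _
    set ρ' := Real.log (r.toReal + 1) with hρ'def
    obtain ⟨n, hn⟩ := exists_nat_gt ((ρ' - (b₀ + p₀ * lg x₀)) / δ)
    refine ⟨b₀ - n * u, p₀ + n * α, ?_, ?_⟩
    · intro x
      rcases eq_or_ne (f x) ⊤ with htop | hne
      · rw [htop]; exact le_top
      have h1 := hS _ (mem_epiS_of_ne_top hne (hf.2.1.1 x).ne')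
      simp only at h1
      have h2 : b₀ + p₀ * lg x ≤ Real.log (f x).toReal := by
        have hx := hmin x
        rw [pw] at hx
        rw [← EP_log_toReal (hf.2.1.1 x).ne' hne] at hx
        exact EP_le_EP_iff.1 hx
      have h3 : (n : ℝ) * (α * lg x - u) ≤ 0 :=
        mul_nonpos_of_nonneg_of_nonpos (Nat.cast_nonneg n) (by linarith)
      calc pw (b₀ - n * u) (p₀ + n * α) x = EP (b₀ - n * u + (p₀ + n * α) * lg x) := rfl
        _ ≤ EP (Real.log (f x).toReal) := EP_le_EP_iff.2 (by nlinarith)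
        _ = f x := EP_log_toReal (hf.2.1.1 x).ne' hne
    · have hnδ : ρ' - (b₀ + p₀ * lg x₀) < n * δ := (div_lt_iff₀ hδ).1 hn
      calc r < EP ρ' := hr'
        _ ≤ EP (b₀ - n * u + (p₀ + n * α) * lg x₀) := EP_le_EP_iff.2 (by nlinarith)
        _ = pw (b₀ - n * u) (p₀ + n * α) x₀ := rfl

end Separation

section FenchelMoreau

variable {f : Rpos → ℝ≥0∞}

lemma sup_pw (hf : f ∈ Gclass) (x : Rpos) :
    f x = ⨆ (b : ℝ) (p : ℝ) (_ : pw b p ≤ f), pw b p x := by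
  apply le_antisymm
  · by_contra h
    push_neg at h
    obtain ⟨b, p, hmin, hlt⟩ := exists_power_lt hf x h
    have hle : pw b p x ≤ ⨆ (b : ℝ) (p : ℝ) (_ : pw b p ≤ f), pw b p x :=
      le_iSup_of_le b <| le_iSup_of_le p <| le_iSup_of_le hmin le_rfl
    exact absurd hle (not_le_of_gt hlt)
  · exact iSup_le fun b => iSup_le fun p => iSup_le fun hmin => hmin x

lemma diamond_diamond (hf : f ∈ Gclass) : diamondP (diamondP f) = f := by
  funext x
  apply le_antisymm
  · rw [diamond_apply]
    refine iSup_le fun y => ?_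
    rcases eq_or_ne (diamondP f y) ⊤ with htop | hne
    · rw [htop, ENNReal.div_top]; exact zero_le
    have hpos := (diamond_pos hf y).ne'
    have heq : diamondP f y = EP (Real.log (diamondP f y).toReal) :=
      (EP_log_toReal hpos hne).symm
    set σ := Real.log (diamondP f y).toReal with hσ
    have hminor : pw (-σ) (lg y) ≤ f := by
      rw [pw_le_f_iff, ex_lg, neg_neg, ← heq]
    calc EP (lg y * lg x) / diamondP f y = EP (lg y * lg x - σ) := by rw [heq, EP_div]
      _ = pw (-σ) (lg y) x := by rw [pw]; congr 1; ring
      _ ≤ f x := hminor x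
  · rw [sup_pw hf x]
    refine iSup_le fun b => iSup_le fun p => iSup_le fun hmin => ?_
    have hd := pw_le_f_iff.1 hmin
    rw [diamond_apply]
    refine le_trans ?_ (le_iSup _ (ex p))
    rw [lg_ex]
    calc pw b p x = EP (p * lg x) / EP (-b) := by
          rw [EP_div, pw]; congr 1; ring
      _ ≤ EP (p * lg x) / diamondP f (ex p) := ENNReal.div_le_div_left hd _

end FenchelMoreau
section Backward

lemma diamond_reindex (f : Rpos → ℝ≥0∞) (y : Rpos) :
    diamondP f y = ⨆ t : ℝ, EP (t * lg y) / f (ex t) := by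
  rw [diamond_apply]
  apply le_antisymm
  · refine iSup_le fun x => ?_
    refine le_trans ?_ (le_iSup _ (lg x))
    rw [ex_lg]
  · refine iSup_le fun t => ?_
    refine le_trans ?_ (le_iSup _ (ex t))
    rw [lg_ex]

lemma term_id (a b C lgx t : ℝ) (s : ℝ≥0∞) :
    EP (t * (b + C * lgx)) / (EP (a + b * t) * s)
      = EP (-(a + b * lgx)) * (EP ((b + C * t) * lgx) / s) := by
  have L : EP (t * (b + C * lgx)) / (EP (a + b * t) * s)
      = EP (t * (b + C * lgx) + -(a + b * t)) * s⁻¹ := by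
    rw [div_eq_mul_inv, ENNReal.mul_inv (Or.inl (EP_ne_zero _)) (Or.inl (EP_ne_top _)),
      ← mul_assoc, EP_inv, ← EP_add]
  have R : EP (-(a + b * lgx)) * (EP ((b + C * t) * lgx) / s)
      = EP (-(a + b * lgx) + (b + C * t) * lgx) * s⁻¹ := by
    rw [div_eq_mul_inv, ← mul_assoc, ← EP_add]
  rw [L, R]
  congr 1
  ring

lemma backward_formula (T : ↥Gclass → ↥Gclass) (a b C : ℝ) (hC : C ≠ 0)
    (hfor : ∀ (f : ↥Gclass) (x : Rpos),
      (T f).1 x = EP (a + b * lg x) * diamondP f.1 (ex (b + C * lg x))) :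
    (∀ f, T (T f) = f) ∧ ∀ f g : ↥Gclass, g.1 ≤ f.1 → (T f).1 ≤ (T g).1 := by
  have hD : ∀ (f : ↥Gclass) (x : Rpos),
      diamondP (T f).1 (ex (b + C * lg x)) =
        EP (-(a + b * lg x)) * diamondP (diamondP f.1) x := by
    intro f x
    rw [diamond_reindex, diamond_reindex (diamondP f.1) x, ENNReal.mul_iSup, lg_ex]
    apply le_antisymm
    · refine iSup_le fun t => ?_
      rw [hfor f (ex t), lg_ex, term_id]
      exact le_iSup (fun m => EP (-(a + b * lg x)) * (EP (m * lg x) / diamondP f.1 (ex m)))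
        (b + C * t)
    · refine iSup_le fun m => ?_
      refine le_trans ?_ (le_iSup _ ((m - b) / C))
      rw [hfor f (ex ((m - b) / C)), lg_ex, term_id]
      have hm : b + C * ((m - b) / C) = m := by field_simp; ring
      rw [hm]
  constructor
  · intro f
    apply Subtype.ext
    funext x
    rw [hfor (T f) x, hD f x, ← mul_assoc, ← EP_add, add_neg_cancel, diamond_diamond f.2]
    simp [EP, Real.exp_zero]
  · intro f g hle x
    rw [hfor f x, hfor g x]
    exact mul_le_mul_right (diamond_antitone hle _) _

end Backward
section Bridge

lemma ofReal_form (A B : ℝ) (hA : 0 < A) (x : Rpos) :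
    ENNReal.ofReal (A * x.1 ^ Real.log B) = EP (Real.log A + Real.log B * lg x) := by
  unfold EP
  rw [Real.exp_add, Real.exp_log hA, Real.rpow_def_of_pos x.2, mul_comm (Real.log x.1)]
  rfl

lemma point_form (B C : ℝ) (hB : 0 < B) (x : Rpos) :
    (⟨B * x.1 ^ C, mul_pos hB (Real.rpow_pos_of_pos x.2 C)⟩ : Rpos)
      = ex (Real.log B + C * lg x) := by
  apply Subtype.ext
  show B * x.1 ^ C = Real.exp (Real.log B + C * lg x)
  rw [Real.exp_add, Real.exp_log hB, Real.rpow_def_of_pos x.2, mul_comm (Real.log x.1)]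
  rfl

lemma C_ne_zero (T : ↥Gclass → ↥Gclass) (hT : Function.Injective T) (a b : ℝ)
    (hfor : ∀ (f : ↥Gclass) (x : Rpos),
      (T f).1 x = EP (a + b * lg x) * diamondP f.1 (ex (b + 0 * lg x))) : False := by
  have h1 : T ⟨dl (ex 0) 0, dl_mem _ _⟩ = T ⟨dl (ex 1) b, dl_mem _ _⟩ := by
    apply Subtype.ext; funext x
    rw [hfor, hfor]
    congr 1
    show diamondP (dl (ex 0) 0) _ = diamondP (dl (ex 1) b) _
    rw [diamond_dl, diamond_dl, lg_ex, lg_ex, lg_ex]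
    congr 1; ring
  have h2 := congrFun (congrArg Subtype.val (hT h1)) (ex 0)
  change dl (ex 0) 0 (ex 0) = dl (ex 1) b (ex 0) at h2
  rw [dl_apply_self, dl_apply_ne] at h2
  · exact EP_ne_top 0 h2
  · intro h; exact one_ne_zero (ex_inj h).symm

end Bridge
section ShapeLemmas

variable {f : Rpos → ℝ≥0∞}

/-- Any member of the class dominating a delta is a delta at the same point. -/
lemma eq_dl_of_dl_le (hf : f ∈ Gclass) {y : Rpos} {c : ℝ} (h : dl y c ≤ f) :
    ∃ c' : ℝ, c ≤ c' ∧ f = dl y c' := by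
  have htop : ∀ x, x ≠ y → f x = ⊤ := fun x hx =>
    top_le_iff.1 (by rw [← dl_apply_ne c hx]; exact h x)
  have hyne : f y ≠ ⊤ := by
    obtain ⟨x, hx⟩ := hf.2.1.2
    rcases eq_or_ne x y with rfl | hxy
    · exact hx.ne
    · exact absurd (htop x hxy) hx.ne
  refine ⟨Real.log (f y).toReal, ?_, ?_⟩
  · have h1 := h y
    rw [dl_apply_self, ← EP_log_toReal (hf.2.1.1 y).ne' hyne] at h1
    exact EP_le_EP_iff.1 h1
  · funext x
    rcases eq_or_ne x y with rfl | hxy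
    · rw [dl_apply_self, EP_log_toReal (hf.2.1.1 x).ne' hyne]
    · rw [dl_apply_ne _ hxy, htop x hxy]

lemma forall_mul_le_imp_zero {A B : ℝ} (h : ∀ v : ℝ, A * v ≤ B) : A = 0 := by
  by_contra hA
  have h1 := h ((B + 1) / A)
  rw [mul_div_cancel₀ _ hA] at h1
  linarith

lemma forall_mul_lt_imp_zero {A B : ℝ} (h : ∀ v : ℝ, A * v < B) : A = 0 := by
  by_contra hA
  have h1 := h (B / A)
  rw [mul_div_cancel₀ _ hA] at h1
  linarith

/-- A convex function on `ℝ` bounded above is nonincreasing in every direction. -/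
lemma convex_bdd_flat {h : ℝ → ℝ} (hcv : ConvexOn ℝ Set.univ h) {M : ℝ}
    (hb : ∀ t, h t ≤ M) (t₁ t₂ : ℝ) : h t₂ = h t₁ := by
  suffices key : ∀ s₁ s₂ : ℝ, h s₂ ≤ h s₁ from le_antisymm (key t₁ t₂) (key t₂ t₁)
  intro t₁ t₂
  by_contra hlt
  push_neg at hlt
  have hd : 0 < h t₂ - h t₁ := by linarith
  obtain ⟨K, hK0, hKge⟩ : ∃ K : ℝ, 0 < K ∧ M - h t₂ < (h t₂ - h t₁) * K := by
    refine ⟨(M - h t₂) / (h t₂ - h t₁) + 1, ?_, ?_⟩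
    · have h0 : 0 ≤ (M - h t₂) / (h t₂ - h t₁) := div_nonneg (by linarith [hb t₂]) hd.le
      linarith
    · have h7 : (h t₂ - h t₁) * ((M - h t₂) / (h t₂ - h t₁)) = M - h t₂ :=
        mul_div_cancel₀ _ hd.ne'
      nlinarith
  have h4 : (0:ℝ) < 1 + K := by linarith
  have ha : (0:ℝ) ≤ K / (1 + K) := by positivity
  have hb' : (0:ℝ) ≤ 1 / (1 + K) := by positivity
  have hab : K / (1 + K) + 1 / (1 + K) = 1 := by
    rw [← add_div, add_comm K 1, div_self h4.ne']
  have hcomb := hcv.2 (Set.mem_univ t₁) (Set.mem_univ (t₂ + K * (t₂ - t₁))) ha hb' hab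
  rw [smul_eq_mul, smul_eq_mul, smul_eq_mul, smul_eq_mul] at hcomb
  have hpt : K / (1 + K) * t₁ + 1 / (1 + K) * (t₂ + K * (t₂ - t₁)) = t₂ := by
    field_simp
    ring
  rw [hpt] at hcomb
  have e1 : (1 + K) * (K / (1 + K) * h t₁ + 1 / (1 + K) * h (t₂ + K * (t₂ - t₁)))
      = K * h t₁ + h (t₂ + K * (t₂ - t₁)) := by
    field_simp
  have h5 : (1 + K) * h t₂ ≤ K * h t₁ + h (t₂ + K * (t₂ - t₁)) := by
    have h6 := mul_le_mul_of_nonneg_left hcomb h4.le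
    rwa [e1] at h6
  nlinarith [hb (t₂ + K * (t₂ - t₁)), h5, hKge]

/-- A convex function on `ℝ` lying below an affine function is affine with the same slope. -/
lemma convex_le_affine_flat {ψ : ℝ → ℝ} (hcv : ConvexOn ℝ Set.univ ψ) {b p : ℝ}
    (hub : ∀ t, ψ t ≤ b + p * t) (t : ℝ) : ψ t = ψ 0 + p * t := by
  set φ : ℝ → ℝ := fun t => ψ t - p * t with hφdef
  have hφcv : ConvexOn ℝ Set.univ φ := by
    refine ⟨convex_univ, ?_⟩
    intro x _ y _ la lb hla hlb hab
    have h1 := hcv.2 (Set.mem_univ x) (Set.mem_univ y) hla hlb hab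
    rw [smul_eq_mul, smul_eq_mul, smul_eq_mul, smul_eq_mul] at h1 ⊢
    simp only [hφdef]
    nlinarith [h1]
  have hφb : ∀ t, φ t ≤ b := fun t => by
    simp only [hφdef]; linarith [hub t]
  have hflat := convex_bdd_flat hφcv hφb 0 t
  simp only [hφdef] at hflat
  linarith [hflat]

lemma gg_to_convex (hgg : GGConvexP f) (hpos : ∀ x, 0 < f x) (hfin : ∀ x, f x ≠ ⊤) :
    ConvexOn ℝ Set.univ (fun t => Real.log (f (ex t)).toReal) := by
  set ψ : ℝ → ℝ := fun t => Real.log (f (ex t)).toReal with hψdef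
  have hEP : ∀ t : ℝ, f (ex t) = EP (ψ t) := fun t =>
    (EP_log_toReal (hpos _).ne' (hfin _)).symm
  refine ⟨convex_univ, ?_⟩
  intro t₁ _ t₂ _ la lb hla hlb hab
  rw [smul_eq_mul, smul_eq_mul, smul_eq_mul, smul_eq_mul]
  rcases eq_or_lt_of_le hla with h0 | hla'
  · have hlb1 : lb = 1 := by linarith
    simp [← h0, hlb1]
  rcases eq_or_lt_of_le hlb with h0 | hlb'
  · have hla1 : la = 1 := by linarith
    simp [← h0, hla1]
  have hgg1 := hgg (ex t₁) (ex t₂) la ⟨hla', by linarith⟩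
  rw [gcomb_ex] at hgg1
  have hlb2 : lb = 1 - la := by linarith
  subst hlb2
  rw [hEP, hEP, hEP, gmul_of_ne (by rw [EP_rpow]; exact EP_ne_zero _)
    (by rw [EP_rpow]; exact EP_ne_zero _), EP_rpow, EP_rpow, ← EP_add] at hgg1
  have := EP_le_EP_iff.1 hgg1
  linarith [this]

/-- Any member of the class lying below a power is a parallel power. -/
lemma eq_pw_of_le_pw (hf : f ∈ Gclass) {b p : ℝ} (h : f ≤ pw b p) :
    ∃ b' : ℝ, b' ≤ b ∧ f = pw b' p := by
  have hfin : ∀ x, f x ≠ ⊤ := fun x => ((h x).trans_lt (EP_lt_top _)).ne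
  have hEP : ∀ t : ℝ, f (ex t) = EP (Real.log (f (ex t)).toReal) := fun t =>
    (EP_log_toReal (hf.2.1.1 _).ne' (hfin _)).symm
  have hcv := gg_to_convex hf.1 hf.2.1.1 hfin
  have hub : ∀ t, Real.log (f (ex t)).toReal ≤ b + p * t := by
    intro t
    have h1 := h (ex t)
    rw [hEP t, pw, lg_ex] at h1
    exact EP_le_EP_iff.1 h1
  have haff := convex_le_affine_flat hcv hub
  refine ⟨Real.log (f (ex 0)).toReal, by linarith [hub 0, haff 0], ?_⟩
  funext x
  have h1 : f x = f (ex (lg x)) := by rw [ex_lg]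
  rw [h1, hEP (lg x), haff (lg x), pw]

end ShapeLemmas
section TShape

lemma hleiff (T : ↥Gclass → ↥Gclass) (hInv : ∀ f, T (T f) = f)
    (hOrd : ∀ f g : ↥Gclass, g.1 ≤ f.1 → (T f).1 ≤ (T g).1)
    (F G : ↥Gclass) : (T F).1 ≤ (T G).1 ↔ G.1 ≤ F.1 := by
  constructor
  · intro h
    have h2 := hOrd (T G) (T F) h
    rwa [hInv, hInv] at h2
  · exact hOrd F G

lemma T_dl_eq_pw (T : ↥Gclass → ↥Gclass) (hInv : ∀ f, T (T f) = f)
    (hOrd : ∀ f g : ↥Gclass, g.1 ≤ f.1 → (T f).1 ≤ (T g).1) (y : Rpos) (c : ℝ) :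
    ∃ b p : ℝ, (T ⟨dl y c, dl_mem y c⟩).1 = pw b p := by
  set g : ↥Gclass := T ⟨dl y c, dl_mem y c⟩ with hgdef
  have hchain : ∀ G H : ↥Gclass, G.1 ≤ g.1 → H.1 ≤ g.1 → G.1 ≤ H.1 ∨ H.1 ≤ G.1 := by
    intro G H hG hH
    have hG' : (T (T G)).1 ≤ g.1 := by rw [hInv]; exact hG
    have hH' : (T (T H)).1 ≤ g.1 := by rw [hInv]; exact hH
    have hG2 : dl y c ≤ (T G).1 := (hleiff T hInv hOrd (T G) _).1 hG'
    have hH2 : dl y c ≤ (T H).1 := (hleiff T hInv hOrd (T H) _).1 hH'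
    obtain ⟨c₁, -, hc₁⟩ := eq_dl_of_dl_le (T G).2 hG2
    obtain ⟨c₂, -, hc₂⟩ := eq_dl_of_dl_le (T H).2 hH2
    rcases le_total c₁ c₂ with hc | hc
    · right
      have h3 : (T G).1 ≤ (T H).1 := by rw [hc₁, hc₂]; exact dl_le_dl_iff.2 ⟨rfl, hc⟩
      exact (hleiff T hInv hOrd G H).1 h3
    · left
      have h3 : (T H).1 ≤ (T G).1 := by rw [hc₁, hc₂]; exact dl_le_dl_iff.2 ⟨rfl, hc⟩
      exact (hleiff T hInv hOrd H G).1 h3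
  obtain ⟨b₀, p₀, hmin₀⟩ := exists_power_le g.2
  have hsl : ∀ b' p', pw b' p' ≤ g.1 → p' = p₀ := by
    intro b' p' h'
    rcases hchain ⟨pw b' p', pw_mem _ _⟩ ⟨pw b₀ p₀, pw_mem _ _⟩ h' hmin₀ with h | h
    · exact (pw_le_pw_iff.1 h).1
    · exact (pw_le_pw_iff.1 h).1.symm
  have hs0 : diamondP g.1 (ex p₀) ≠ 0 := (diamond_pos g.2 _).ne'
  have hstop : diamondP g.1 (ex p₀) ≠ ⊤ :=
    ((pw_le_f_iff.1 hmin₀).trans_lt (EP_lt_top _)).ne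
  have hEPs : EP (Real.log (diamondP g.1 (ex p₀)).toReal) = diamondP g.1 (ex p₀) :=
    EP_log_toReal hs0 hstop
  refine ⟨-Real.log (diamondP g.1 (ex p₀)).toReal, p₀, ?_⟩
  have hminstar : pw (-Real.log (diamondP g.1 (ex p₀)).toReal) p₀ ≤ g.1 :=
    pw_le_f_iff.2 (by rw [neg_neg, hEPs])
  funext x
  refine le_antisymm ?_ (hminstar x)
  have hsup := sup_pw g.2 x
  rw [hsup]
  refine iSup_le fun b' => iSup_le fun p' => iSup_le fun hm => ?_
  have hp' : p' = p₀ := hsl b' p' hm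
  have h2 : diamondP g.1 (ex p₀) ≤ EP (-b') := by rw [← hp']; exact pw_le_f_iff.1 hm
  have hb' : b' ≤ -Real.log (diamondP g.1 (ex p₀)).toReal := by
    have h3 := EP_le_EP_iff.1 (hEPs.symm ▸ h2)
    linarith
  exact pw_le_pw_iff.2 ⟨hp', hb'⟩ x

lemma T_pw_eq_dl (T : ↥Gclass → ↥Gclass) (hInv : ∀ f, T (T f) = f)
    (hOrd : ∀ f g : ↥Gclass, g.1 ≤ f.1 → (T f).1 ≤ (T g).1) (b p : ℝ) :
    ∃ (y : Rpos) (c : ℝ), (T ⟨pw b p, pw_mem b p⟩).1 = dl y c := by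
  set g : ↥Gclass := T ⟨pw b p, pw_mem b p⟩ with hgdef
  have hchain : ∀ G H : ↥Gclass, g.1 ≤ G.1 → g.1 ≤ H.1 → G.1 ≤ H.1 ∨ H.1 ≤ G.1 := by
    intro G H hG hH
    have hG' : g.1 ≤ (T (T G)).1 := by rw [hInv]; exact hG
    have hH' : g.1 ≤ (T (T H)).1 := by rw [hInv]; exact hH
    have hG2 : (T G).1 ≤ pw b p := (hleiff T hInv hOrd _ (T G)).1 hG'
    have hH2 : (T H).1 ≤ pw b p := (hleiff T hInv hOrd _ (T H)).1 hH'
    obtain ⟨b₁, -, hb₁⟩ := eq_pw_of_le_pw (T G).2 hG2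
    obtain ⟨b₂, -, hb₂⟩ := eq_pw_of_le_pw (T H).2 hH2
    rcases le_total b₁ b₂ with hb | hb
    · right
      have h3 : (T G).1 ≤ (T H).1 := by rw [hb₁, hb₂]; exact pw_le_pw_iff.2 ⟨rfl, hb⟩
      exact (hleiff T hInv hOrd G H).1 h3
    · left
      have h3 : (T H).1 ≤ (T G).1 := by rw [hb₁, hb₂]; exact pw_le_pw_iff.2 ⟨rfl, hb⟩
      exact (hleiff T hInv hOrd H G).1 h3
  obtain ⟨y, hy⟩ := g.2.2.1.2
  have htop : ∀ x, x ≠ y → g.1 x = ⊤ := by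
    intro x hx
    by_contra hne
    have hmaj1 : g.1 ≤ dl y (Real.log (g.1 y).toReal) := by
      rw [le_dl_iff, EP_log_toReal (g.2.2.1.1 y).ne' hy.ne]
    have hmaj2 : g.1 ≤ dl x (Real.log (g.1 x).toReal) := by
      rw [le_dl_iff, EP_log_toReal (g.2.2.1.1 x).ne' hne]
    rcases hchain ⟨_, dl_mem y _⟩ ⟨_, dl_mem x _⟩ hmaj1 hmaj2 with h | h
    · exact hx (dl_le_dl_iff.1 h).1.symm
    · exact hx (dl_le_dl_iff.1 h).1
  refine ⟨y, Real.log (g.1 y).toReal, ?_⟩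
  funext x
  rcases eq_or_ne x y with rfl | hx
  · rw [dl_apply_self, EP_log_toReal (g.2.2.1.1 x).ne' hy.ne]
  · rw [dl_apply_ne _ hx, htop x hx]

end TShape
section Cauchy

lemma additive_antitone_linear {c : ℝ → ℝ}
    (hadd : ∀ x y, c (x + y) = c x + c y)
    (hmono : ∀ x y, x ≤ y → c y ≤ c x) :
    ∀ x, c x = c 1 * x := by
  have h0 : c 0 = 0 := by have := hadd 0 0; simp at this; linarith
  have hnat : ∀ (n : ℕ) (x : ℝ), c (n * x) = n * c x := by
    intro n
    induction n with
    | zero => intro x; simpa using h0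
    | succ n ih =>
      intro x
      have h1 : ((n + 1 : ℕ) : ℝ) * x = (n : ℝ) * x + x := by push_cast; ring
      rw [h1, hadd, ih]
      push_cast; ring
  have hneg : ∀ x, c (-x) = -c x := by
    intro x
    have := hadd x (-x)
    simp at this
    linarith [this, h0]
  have hc1 : c 1 ≤ 0 := by
    have := hmono 0 1 zero_le_one
    linarith [h0]
  have hmain : ∀ x : ℝ, 0 < x → c x = c 1 * x := by
    intro x hx
    have hub : ∀ m : ℕ, 0 < m → c x ≤ c 1 * x - c 1 / m := by
      intro m hm
      have hm0 : (0:ℝ) < m := by exact_mod_cast hm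
      have hmx : (0:ℝ) ≤ (m:ℝ) * x := by positivity
      set n : ℕ := ⌊(m:ℝ) * x⌋₊ with hndef
      have hn1 : (n:ℝ) ≤ (m:ℝ) * x := Nat.floor_le hmx
      have hn2 : (m:ℝ) * x < (n:ℝ) + 1 := Nat.lt_floor_add_one _
      have hA : c ((m:ℝ) * x) ≤ c ((n:ℝ) * 1) := by
        rw [mul_one]; exact hmono _ _ hn1
      rw [hnat m x, hnat n 1] at hA
      have hB : (n:ℝ) * c 1 ≤ ((m:ℝ) * x - 1) * c 1 :=
        mul_le_mul_of_nonpos_right (by linarith) hc1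
      have key : (m:ℝ) * c x ≤ (m:ℝ) * (c 1 * x) - c 1 := by nlinarith
      have hdiv : c 1 / m * m = c 1 := div_mul_cancel₀ _ hm0.ne'
      nlinarith [key, hm0, hdiv]
    have hlb : ∀ m : ℕ, 0 < m → c 1 * x + c 1 / m ≤ c x := by
      intro m hm
      have hm0 : (0:ℝ) < m := by exact_mod_cast hm
      have hmx : (0:ℝ) ≤ (m:ℝ) * x := by positivity
      set n : ℕ := ⌈(m:ℝ) * x⌉₊ with hndef
      have hn1 : (m:ℝ) * x ≤ (n:ℝ) := Nat.le_ceil _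
      have hn2 : (n:ℝ) < (m:ℝ) * x + 1 := by
        have := Nat.ceil_lt_add_one hmx
        exact_mod_cast this
      have hA : c ((n:ℝ) * 1) ≤ c ((m:ℝ) * x) := by
        rw [mul_one]; exact hmono _ _ hn1
      rw [hnat m x, hnat n 1] at hA
      have hB : ((m:ℝ) * x + 1) * c 1 ≤ (n:ℝ) * c 1 :=
        mul_le_mul_of_nonpos_right (by linarith) hc1
      have key : (m:ℝ) * (c 1 * x) + c 1 ≤ (m:ℝ) * c x := by nlinarith
      have hdiv : c 1 / m * m = c 1 := div_mul_cancel₀ _ hm0.ne'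
      nlinarith [key, hm0, hdiv]
    by_contra hne
    rcases lt_or_gt_of_ne hne with hlt | hgt
    · -- c x < c 1 * x : contradict hlb for large m
      obtain ⟨m, hm⟩ := exists_nat_gt ((-c 1) / (c 1 * x - c x))
      have hm1 : 0 < m := by
        by_contra hm1
        push_neg at hm1
        interval_cases m
        · simp at hm
          nlinarith [div_nonneg (by linarith : (0:ℝ) ≤ -c 1) (by linarith : (0:ℝ) ≤ c 1 * x - c x)]
      have hm0 : (0:ℝ) < m := by exact_mod_cast hm1
      have h2 := hlb m hm1
      have h3 : (-c 1) < m * (c 1 * x - c x) := by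
        have := (div_lt_iff₀ (by linarith : (0:ℝ) < c 1 * x - c x)).1 hm
        linarith [this]
      have hdiv : c 1 / m * m = c 1 := div_mul_cancel₀ _ hm0.ne'
      nlinarith [h2, h3, hm0, hdiv]
    · -- c 1 * x < c x : contradict hub for large m
      obtain ⟨m, hm⟩ := exists_nat_gt ((-c 1) / (c x - c 1 * x))
      have hm1 : 0 < m := by
        by_contra hm1
        push_neg at hm1
        interval_cases m
        · simp at hm
          nlinarith [div_nonneg (by linarith : (0:ℝ) ≤ -c 1) (by linarith : (0:ℝ) ≤ c x - c 1 * x)]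
      have hm0 : (0:ℝ) < m := by exact_mod_cast hm1
      have h2 := hub m hm1
      have h3 : (-c 1) < m * (c x - c 1 * x) := by
        have := (div_lt_iff₀ (by linarith : (0:ℝ) < c x - c 1 * x)).1 hm
        linarith [this]
      have hdiv : c 1 / m * m = c 1 := div_mul_cancel₀ _ hm0.ne'
      nlinarith [h2, h3, hm0, hdiv]
  intro x
  rcases lt_trichotomy x 0 with hx | hx | hx
  · have := hmain (-x) (by linarith)
    rw [hneg] at this
    linarith [this]
  · rw [hx, h0]; ring
  · exact hmain x hx

end Cauchy
lemma forward_main (T : ↥Gclass → ↥Gclass) (hT : Function.Injective T)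
    (hInv : ∀ f, T (T f) = f)
    (hOrd : ∀ f g : ↥Gclass, g.1 ≤ f.1 → (T f).1 ≤ (T g).1) :
    ∃ a b C : ℝ, ∀ (f : ↥Gclass) (x : Rpos),
      (T f).1 x = EP (a + b * lg x) * diamondP f.1 (ex (b + C * lg x)) := by
  classical
  have hTinj : Function.Injective T := fun A B h => by rw [← hInv A, h, hInv B]
  choose bfun pfun hbp using fun (u κ : ℝ) => T_dl_eq_pw T hInv hOrd (ex u) κ
  choose yfun cfun hyc using fun (q β : ℝ) => T_pw_eq_dl T hInv hOrd β q
  -- slope only depends on the base point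
  have hslope : ∀ u κ, pfun u κ = pfun u 0 := by
    have key : ∀ u κ₁ κ₂, κ₁ ≤ κ₂ → pfun u κ₁ = pfun u κ₂ := by
      intro u κ₁ κ₂ h
      have hle : dl (ex u) κ₁ ≤ dl (ex u) κ₂ := dl_le_dl_iff.2 ⟨rfl, h⟩
      have h2 := hOrd ⟨dl (ex u) κ₂, dl_mem _ _⟩ ⟨dl (ex u) κ₁, dl_mem _ _⟩ hle
      rw [hbp u κ₁, hbp u κ₂] at h2
      exact (pw_le_pw_iff.1 h2).1.symm
    intro u κ
    rcases le_total κ 0 with h | h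
    · exact key u κ 0 h
    · exact (key u 0 κ h).symm
  -- strict antitonicity of bfun u
  have hmono_b : ∀ u κ₁ κ₂, κ₁ ≤ κ₂ → bfun u κ₂ ≤ bfun u κ₁ := by
    intro u κ₁ κ₂ h
    have hle : dl (ex u) κ₁ ≤ dl (ex u) κ₂ := dl_le_dl_iff.2 ⟨rfl, h⟩
    have h2 := hOrd ⟨dl (ex u) κ₂, dl_mem _ _⟩ ⟨dl (ex u) κ₁, dl_mem _ _⟩ hle
    rw [hbp u κ₁, hbp u κ₂] at h2
    exact (pw_le_pw_iff.1 h2).2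
  have hbinj : ∀ u κ₁ κ₂, bfun u κ₁ = bfun u κ₂ → κ₁ = κ₂ := by
    intro u κ₁ κ₂ h
    have e1 : (T ⟨dl (ex u) κ₁, dl_mem _ _⟩).1 = pw (bfun u κ₁) (pfun u 0) := by
      rw [hbp u κ₁, hslope u κ₁]
    have e2 : (T ⟨dl (ex u) κ₂, dl_mem _ _⟩).1 = pw (bfun u κ₂) (pfun u 0) := by
      rw [hbp u κ₂, hslope u κ₂]
    have e3 : T ⟨dl (ex u) κ₁, dl_mem _ _⟩ = T ⟨dl (ex u) κ₂, dl_mem _ _⟩ :=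
      Subtype.ext (by rw [e1, e2, h])
    have e4 := hTinj e3
    have e5 : dl (ex u) κ₁ = dl (ex u) κ₂ := congrArg Subtype.val e4
    exact (dl_inj e5).2
  have hbstrict : ∀ u κ₁ κ₂, κ₁ < κ₂ → bfun u κ₂ < bfun u κ₁ := by
    intro u κ₁ κ₂ h
    refine lt_of_le_of_ne (hmono_b u κ₁ κ₂ h.le) fun he => ?_
    exact h.ne (hbinj u κ₁ κ₂ (he.symm))
  -- injectivity of the slope assignment
  have hPinj : ∀ u₁ u₂, pfun u₁ 0 = pfun u₂ 0 → u₁ = u₂ := by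
    intro u₁ u₂ h
    have hcmp : pw (bfun u₁ 0) (pfun u₁ 0) ≤ pw (bfun u₂ 0) (pfun u₂ 0) ∨
        pw (bfun u₂ 0) (pfun u₂ 0) ≤ pw (bfun u₁ 0) (pfun u₁ 0) := by
      rcases le_total (bfun u₁ 0) (bfun u₂ 0) with hb | hb
      · exact Or.inl (pw_le_pw_iff.2 ⟨h, hb⟩)
      · exact Or.inr (pw_le_pw_iff.2 ⟨h.symm, hb⟩)
    rcases hcmp with hc | hc
    · have h2 : (T ⟨dl (ex u₁) 0, dl_mem _ _⟩).1 ≤ (T ⟨dl (ex u₂) 0, dl_mem _ _⟩).1 := by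
        rw [hbp u₁ 0, hbp u₂ 0]; exact hc
      have h3 := (hleiff T hInv hOrd _ _).1 h2
      exact (ex_inj (dl_le_dl_iff.1 h3).1).symm
    · have h2 : (T ⟨dl (ex u₂) 0, dl_mem _ _⟩).1 ≤ (T ⟨dl (ex u₁) 0, dl_mem _ _⟩).1 := by
        rw [hbp u₁ 0, hbp u₂ 0]; exact hc
      have h3 := (hleiff T hInv hOrd _ _).1 h2
      exact ex_inj (dl_le_dl_iff.1 h3).1
  -- surjectivity of bfun u and of the slope map
  have hkey_pw : ∀ q β, bfun (lg (yfun q β)) (cfun q β) = β ∧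
      pfun (lg (yfun q β)) 0 = q := by
    intro q β
    have e2 : T ⟨pw β q, pw_mem β q⟩ = ⟨dl (yfun q β) (cfun q β), dl_mem _ _⟩ :=
      Subtype.ext (hyc q β)
    have e3 : T ⟨dl (yfun q β) (cfun q β), dl_mem _ _⟩ = ⟨pw β q, pw_mem β q⟩ := by
      rw [← e2, hInv]
    have e4 : (T ⟨dl (ex (lg (yfun q β))) (cfun q β), dl_mem _ _⟩).1 = pw β q := by
      rw [ex_lg]
      exact congrArg Subtype.val e3
    rw [hbp (lg (yfun q β)) (cfun q β)] at e4
    obtain ⟨hb, hp⟩ := pw_inj e4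
    exact ⟨hb, by rw [← hslope (lg (yfun q β)) (cfun q β)]; exact hp⟩
  have hPsurj : ∀ q, ∃ u, pfun u 0 = q := fun q =>
    ⟨lg (yfun q 0), (hkey_pw q 0).2⟩
  have hbsurj : ∀ u β, ∃ κ, bfun u κ = β := by
    intro u β
    obtain ⟨hb, hp⟩ := hkey_pw (pfun u 0) β
    have hu : lg (yfun (pfun u 0) β) = u := hPinj _ _ hp
    rw [hu] at hb
    exact ⟨cfun (pfun u 0) β, hb⟩
  -- the master relation
  have hequiv : ∀ u q β κ, β + q * u ≤ κ ↔
      bfun u κ + pfun u 0 * lg (yfun q β) ≤ cfun q β := by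
    intro u q β κ
    have h1 : pw β q ≤ dl (ex u) κ ↔ β + q * u ≤ κ := by
      rw [pw_le_dl_iff, lg_ex]
    have h2 := hleiff T hInv hOrd ⟨dl (ex u) κ, dl_mem _ _⟩ ⟨pw β q, pw_mem β q⟩
    rw [← h1, ← h2, hbp u κ, hslope u κ, hyc q β, pw_le_dl_iff]
  have hstar : ∀ u q β, bfun u (β + q * u) = cfun q β - pfun u 0 * lg (yfun q β) := by
    intro u q β
    have h1 : bfun u (β + q * u) + pfun u 0 * lg (yfun q β) ≤ cfun q β :=
      (hequiv u q β _).1 le_rfl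
    by_contra hne
    have hlt : bfun u (β + q * u) < cfun q β - pfun u 0 * lg (yfun q β) := by
      rcases lt_or_eq_of_le (by linarith : bfun u (β + q * u) ≤
        cfun q β - pfun u 0 * lg (yfun q β)) with h | h
      · exact h
      · exact absurd h hne
    obtain ⟨κ₁, hκ₁⟩ := hbsurj u ((bfun u (β + q * u) +
      (cfun q β - pfun u 0 * lg (yfun q β))) / 2)
    have h3 : bfun u κ₁ + pfun u 0 * lg (yfun q β) ≤ cfun q β := by
      rw [hκ₁]; linarith
    have h4 : β + q * u ≤ κ₁ := (hequiv u q β κ₁).2 h3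
    have h5 : bfun u κ₁ ≤ bfun u (β + q * u) := hmono_b u _ _ h4
    rw [hκ₁] at h5
    linarith
  -- q = 0 : bfun in terms of cfun 0 and the point of yfun 0
  have hq0 : ∀ u κ, bfun u κ = cfun 0 κ - pfun u 0 * lg (yfun 0 κ) := by
    intro u κ
    have := hstar u 0 κ
    simpa using this
  -- the delta point for slope-zero powers is constant
  have hY0const : ∀ κ₁ κ₂, lg (yfun 0 κ₁) = lg (yfun 0 κ₂) := by
    have key : ∀ κ₁ κ₂, κ₁ < κ₂ → lg (yfun 0 κ₁) = lg (yfun 0 κ₂) := by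
      intro κ₁ κ₂ hκ
      by_contra hne
      have hd : lg (yfun 0 κ₁) - lg (yfun 0 κ₂) ≠ 0 := sub_ne_zero.2 hne
      have hall : ∀ v : ℝ, v * (lg (yfun 0 κ₁) - lg (yfun 0 κ₂)) <
          cfun 0 κ₁ - cfun 0 κ₂ := by
        intro v
        obtain ⟨u, hu⟩ := hPsurj v
        have h1 := hbstrict u κ₁ κ₂ hκ
        rw [hq0 u κ₁, hq0 u κ₂, hu] at h1
        linarith
      exact hd (forall_mul_lt_imp_zero (fun v => by rw [mul_comm]; exact hall v))
    intro κ₁ κ₂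
    rcases lt_trichotomy κ₁ κ₂ with h | h | h
    · exact key κ₁ κ₂ h
    · rw [h]
    · exact (key κ₂ κ₁ h).symm
  have hbase : ∀ u κ, bfun u κ = cfun 0 κ - pfun u 0 * lg (yfun 0 0) := by
    intro u κ
    rw [hq0 u κ, hY0const κ 0]
  -- strict antitonicity and surjectivity of g := cfun 0
  have hgstrict : ∀ κ₁ κ₂, κ₁ < κ₂ → cfun 0 κ₂ < cfun 0 κ₁ := by
    intro κ₁ κ₂ h
    have h1 := hbstrict 0 κ₁ κ₂ h
    rw [hbase 0 κ₁, hbase 0 κ₂] at h1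
    linarith
  have hgmono : ∀ κ₁ κ₂, κ₁ ≤ κ₂ → cfun 0 κ₂ ≤ cfun 0 κ₁ := by
    intro κ₁ κ₂ h
    rcases lt_or_eq_of_le h with h | h
    · exact (hgstrict κ₁ κ₂ h).le
    · rw [h]
  have hgsurj : ∀ v : ℝ, ∃ κ, cfun 0 κ = v := by
    intro v
    obtain ⟨κ, hκ⟩ := hbsurj 0 (v - pfun 0 0 * lg (yfun 0 0))
    refine ⟨κ, ?_⟩
    rw [hbase 0 κ] at hκ
    linarith
  -- the dagger relation
  have hdag : ∀ q β u, cfun 0 (β + q * u) = cfun q β +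
      pfun u 0 * (lg (yfun 0 0) - lg (yfun q β)) := by
    intro q β u
    have h1 := hstar u q β
    rw [hbase u (β + q * u)] at h1
    linarith [h1]
  -- q = 1, β = 0 gives the slope map in terms of g
  have hgu : ∀ u, cfun 0 u = cfun 1 0 +
      pfun u 0 * (lg (yfun 0 0) - lg (yfun 1 0)) := by
    intro u
    have := hdag 1 0 u
    simpa using this
  have hμ0 : lg (yfun 0 0) - lg (yfun 1 0) ≠ 0 := by
    intro h
    have h1 := hgu 0
    have h2 := hgu 1
    rw [h] at h1 h2
    have := hgstrict 0 1 zero_lt_one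
    linarith
  have hPu : ∀ u, pfun u 0 = (cfun 0 u - cfun 1 0) / (lg (yfun 0 0) - lg (yfun 1 0)) := by
    intro u
    rw [eq_div_iff hμ0]
    linarith [hgu u]
  -- translation equation for g with factor 1
  have hν1 : ∀ β, lg (yfun 0 0) - lg (yfun 1 β) = lg (yfun 0 0) - lg (yfun 1 0) := by
    intro β
    set μ₀ := lg (yfun 0 0) - lg (yfun 1 0) with hμdef
    set ν := lg (yfun 0 0) - lg (yfun 1 β) with hνdef
    have hrel : ∀ u, cfun 0 (β + u) = cfun 1 β + (cfun 0 u - cfun 1 0) / μ₀ * ν := by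
      intro u
      have := hdag 1 β u
      rw [one_mul, hPu u] at this
      exact this
    -- monotone comparison in both cases forces ν = μ₀
    rcases le_or_gt 0 β with hβ | hβ
    · have hall : ∀ v : ℝ, (ν / μ₀ - 1) * v ≤
          cfun 1 0 * (ν / μ₀) - cfun 1 β := by
        intro v
        obtain ⟨κ, hκ⟩ := hgsurj v
        have h1 : cfun 0 (β + κ) ≤ cfun 0 κ := hgmono κ (β + κ) (by linarith)
        rw [hrel κ, hκ] at h1
        have h2 : (v - cfun 1 0) / μ₀ * ν = v * (ν / μ₀) - cfun 1 0 * (ν / μ₀) := by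
          field_simp
        rw [h2] at h1
        nlinarith [h1]
      have := forall_mul_le_imp_zero hall
      have hμ : ν / μ₀ = 1 := by linarith
      rw [div_eq_one_iff_eq hμ0] at hμ
      linarith
    · have hall : ∀ v : ℝ, (1 - ν / μ₀) * v ≤
          cfun 1 β - cfun 1 0 * (ν / μ₀) := by
        intro v
        obtain ⟨κ, hκ⟩ := hgsurj v
        have h1 : cfun 0 κ ≤ cfun 0 (β + κ) := hgmono (β + κ) κ (by linarith)
        rw [hrel κ, hκ] at h1
        have h2 : (v - cfun 1 0) / μ₀ * ν = v * (ν / μ₀) - cfun 1 0 * (ν / μ₀) := by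
          field_simp
        rw [h2] at h1
        nlinarith [h1]
      have := forall_mul_le_imp_zero hall
      have hμ : ν / μ₀ = 1 := by linarith
      rw [div_eq_one_iff_eq hμ0] at hμ
      linarith
  have hgadd : ∀ β u, cfun 0 (β + u) = cfun 0 β + cfun 0 u - cfun 0 0 := by
    intro β u
    have h1 : ∀ w, cfun 0 (β + w) = cfun 1 β + (cfun 0 w - cfun 1 0) / (lg (yfun 0 0)
        - lg (yfun 1 0)) * (lg (yfun 0 0) - lg (yfun 1 β)) := by
      intro w
      have := hdag 1 β w
      rw [one_mul, hPu w] at this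
      exact this
    have h2 := h1 u
    have h3 := h1 0
    rw [hν1 β, div_mul_cancel₀ _ hμ0] at h2 h3
    rw [add_zero] at h3
    linarith
  -- linearity of g
  have hclin := additive_antitone_linear
    (c := fun v => cfun 0 v - cfun 0 0)
    (fun x y => by rw [hgadd x y]; ring)
    (fun x y h => by linarith [hgmono x y h])
  have hE : ∀ v, cfun 0 v = cfun 0 0 - (cfun 0 0 - cfun 0 1) * v := by
    intro v
    have := hclin v
    linarith [this]
  have hEpos : 0 < cfun 0 0 - cfun 0 1 := by linarith [hgstrict 0 1 zero_lt_one]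
  obtain ⟨E, hEdef⟩ : ∃ E : ℝ, E = cfun 0 0 - cfun 0 1 := ⟨_, rfl⟩
  rw [← hEdef] at hE hEpos
  obtain ⟨μ₀', hμdef⟩ : ∃ m : ℝ, m = lg (yfun 0 0) - lg (yfun 1 0) := ⟨_, rfl⟩
  rw [← hμdef] at hμ0 hPu
  obtain ⟨P₀, hP0def⟩ : ∃ p : ℝ, p = (cfun 0 0 - cfun 1 0) / μ₀' := ⟨_, rfl⟩
  obtain ⟨P₁, hP1def⟩ : ∃ p : ℝ, p = -E / μ₀' := ⟨_, rfl⟩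
  have hP1ne : P₁ ≠ 0 := by
    rw [hP1def]
    exact div_ne_zero (neg_ne_zero.2 hEpos.ne') hμ0
  have hPlin : ∀ u, pfun u 0 = P₀ + P₁ * u := by
    intro u
    rw [hPu u, hE u, hP0def, hP1def]
    field_simp
    ring
  have hYq : ∀ q β, lg (yfun q β) = lg (yfun 0 0) + E * q / P₁ := by
    intro q β
    have h1 := hdag q β 0
    have h2 := hdag q β 1
    rw [hPlin 0, hE (β + q * 0)] at h1
    rw [hPlin 1, hE (β + q * 1)] at h2
    have h3 : -(E * q) = P₁ * (lg (yfun 0 0) - lg (yfun q β)) := by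
      linear_combination h2 - h1
    have h4 : P₁ * lg (yfun q β) = P₁ * lg (yfun 0 0) + E * q := by
      linear_combination h3
    have h5 : P₁ * lg (yfun q β) = P₁ * (lg (yfun 0 0) + E * q / P₁) := by
      rw [mul_add, mul_div_cancel₀ _ hP1ne]
      linarith [h4]
    exact mul_left_cancel₀ hP1ne h5
  have hCq : ∀ q β, cfun q β = cfun 0 0 - E * β + P₀ * (E * q / P₁) := by
    intro q β
    have h1 := hdag q β 0
    rw [hPlin 0, hE (β + q * 0), hYq q β] at h1
    linear_combination -h1
  have hinv_d : ∀ u κ, yfun (pfun u 0) (bfun u κ) = ex u ∧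
      cfun (pfun u 0) (bfun u κ) = κ := by
    intro u κ
    have e1 : (T ⟨dl (ex u) κ, dl_mem _ _⟩).1 = pw (bfun u κ) (pfun u 0) := by
      rw [hbp u κ, hslope u κ]
    have e2 : T ⟨dl (ex u) κ, dl_mem _ _⟩ = ⟨pw (bfun u κ) (pfun u 0), pw_mem _ _⟩ :=
      Subtype.ext e1
    have e3 : (T ⟨pw (bfun u κ) (pfun u 0), pw_mem _ _⟩).1 = dl (ex u) κ := by
      rw [← e2, hInv]
    exact dl_inj ((hyc (pfun u 0) (bfun u κ)).symm.trans e3)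
  have hm01 : ∀ u : ℝ, lg (yfun 0 0) + E * (P₀ + P₁ * u) / P₁ = u := by
    intro u
    have k0 := congrArg lg (hinv_d u 0).1
    rw [lg_ex, hYq (pfun u 0) (bfun u 0), hPlin u] at k0
    exact k0
  have hE1 : E = 1 := by
    have m0 := hm01 0
    have m1 := hm01 1
    have h6 : E * (P₀ + P₁ * 1) / P₁ - E * (P₀ + P₁ * 0) / P₁ = E := by
      field_simp
      ring
    linarith [m0, m1, h6]
  have hh0 : lg (yfun 0 0) = -P₀ / P₁ := by
    have m0 := hm01 0
    have h7 : E * (P₀ + P₁ * 0) / P₁ = P₀ / P₁ := by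
      rw [hE1]; ring_nf
    rw [h7] at m0
    linear_combination m0
  -- the transform agrees with the standard form on deltas
  have hTdl : ∀ u κ (x : Rpos), (T ⟨dl (ex u) κ, dl_mem _ _⟩).1 x
      = EP ((cfun 0 0 + P₀ * P₀ / P₁) + P₀ * lg x)
        * diamondP (dl (ex u) κ) (ex (P₀ + P₁ * lg x)) := by
    intro u κ x
    rw [hbp u κ, hslope u κ, diamond_dl, lg_ex, lg_ex, ← EP_add]
    show EP (bfun u κ + pfun u 0 * lg x) = _
    congr 1
    rw [hbase u κ, hE κ, hE1, hPlin u, hh0]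
    field_simp
    ring
  -- the transform agrees with the standard form on powers
  have hTpw : ∀ q β (x : Rpos), (T ⟨pw β q, pw_mem β q⟩).1 x
      = EP ((cfun 0 0 + P₀ * P₀ / P₁) + P₀ * lg x)
        * diamondP (pw β q) (ex (P₀ + P₁ * lg x)) := by
    intro q β x
    have hlgY : lg (yfun q β) = (q - P₀) / P₁ := by
      rw [hYq q β, hh0, hE1]
      field_simp
      ring
    rw [hyc q β]
    rcases eq_or_ne x (yfun q β) with rfl | hx
    · rw [dl_apply_self, diamond_pw,
        if_pos (by rw [lg_ex, hlgY]; field_simp; ring : lg (ex (P₀ + P₁ * lg (yfun q β)))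
          = q), ← EP_add]
      congr 1
      rw [hCq q β, hE1, hlgY]
      field_simp
      ring
    · rw [dl_apply_ne _ hx, diamond_pw, if_neg ?_, EP_mul_top]
      intro hcond
      rw [lg_ex] at hcond
      have h8 : lg x = lg (yfun q β) := by
        rw [hlgY, eq_div_iff hP1ne]
        linarith [hcond]
      exact hx (by rw [← ex_lg x, h8, ex_lg])
  -- the final sandwich
  refine ⟨cfun 0 0 + P₀ * P₀ / P₁, P₀, P₁, fun f x => ?_⟩
  apply le_antisymm
  · rcases eq_or_ne (diamondP f.1 (ex (P₀ + P₁ * lg x))) ⊤ with hstop | hsne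
    · rw [hstop, EP_mul_top]
      exact le_top
    · have hs0 : diamondP f.1 (ex (P₀ + P₁ * lg x)) ≠ 0 := (diamond_pos f.2 _).ne'
      have hEPσ : EP (Real.log (diamondP f.1 (ex (P₀ + P₁ * lg x))).toReal)
          = diamondP f.1 (ex (P₀ + P₁ * lg x)) := EP_log_toReal hs0 hsne
      have hmin : pw (-Real.log (diamondP f.1 (ex (P₀ + P₁ * lg x))).toReal)
          (P₀ + P₁ * lg x) ≤ f.1 := pw_le_f_iff.2 (by rw [neg_neg, hEPσ])
      have h2 := hOrd f ⟨pw (-Real.log (diamondP f.1 (ex (P₀ + P₁ * lg x))).toReal)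
        (P₀ + P₁ * lg x), pw_mem _ _⟩ hmin x
      rw [hTpw (P₀ + P₁ * lg x)
        (-Real.log (diamondP f.1 (ex (P₀ + P₁ * lg x))).toReal) x] at h2
      rw [diamond_pw, if_pos (lg_ex _), neg_neg, hEPσ] at h2
      exact h2
  · rw [diamond_reindex, ENNReal.mul_iSup]
    refine iSup_le fun t => ?_
    rcases eq_or_ne (f.1 (ex t)) ⊤ with htop | hne
    · rw [htop, ENNReal.div_top, mul_zero]
      exact zero_le
    · have hf0 := (f.2.2.1.1 (ex t)).ne'
      obtain ⟨κt, hκt⟩ : ∃ κ, f.1 (ex t) = EP κ :=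
        ⟨Real.log (f.1 (ex t)).toReal, (EP_log_toReal hf0 hne).symm⟩
      have hmaj : f.1 ≤ dl (ex t) κt := le_dl_iff.2 (le_of_eq hκt)
      have h1 := hOrd ⟨dl (ex t) κt, dl_mem _ _⟩ f hmaj x
      rw [hTdl t κt x] at h1
      refine le_trans (le_of_eq ?_) h1
      rw [diamond_dl, lg_ex, lg_ex, hκt, EP_div]
/-- Axiomatization of GG-conjugation: a one-to-one `T : 𝒢(0,∞) → 𝒢(0,∞)` is
involutive and order-reversing iff `(T f)(x) = A · x^(log B) · f^◇(B x^C)` for some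
`A > 0`, `B > 0`, `C ∈ ℝ`. -/
theorem ggdual_axiomatization (T : ↥Gclass → ↥Gclass) (hT : Function.Injective T) :
    ((∀ f, T (T f) = f) ∧
      (∀ f g : ↥Gclass, g.1 ≤ f.1 → (T f).1 ≤ (T g).1))
    ↔ ∃ (A B C : ℝ) (_ : 0 < A) (hB : 0 < B),
        ∀ (f : ↥Gclass) (x : Rpos),
          (T f).1 x
            = ENNReal.ofReal (A * x.1 ^ Real.log B) *
                diamondP f.1 ⟨B * x.1 ^ C,
                  mul_pos hB (Real.rpow_pos_of_pos x.2 C)⟩ := by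
  constructor
  · rintro ⟨hInv, hOrd⟩
    obtain ⟨a, b, C, hfor⟩ := forward_main T hT hInv hOrd
    refine ⟨Real.exp a, Real.exp b, C, Real.exp_pos a, Real.exp_pos b, fun f x => ?_⟩
    rw [ofReal_form _ _ (Real.exp_pos a), point_form _ _ (Real.exp_pos b), Real.log_exp,
      Real.log_exp]
    exact hfor f x
  · rintro ⟨A, B, C, hA, hB, hfor'⟩
    have hfor : ∀ (f : ↥Gclass) (x : Rpos),
        (T f).1 x = EP (Real.log A + Real.log B * lg x)
          * diamondP f.1 (ex (Real.log B + C * lg x)) := fun f x => by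
      rw [hfor' f x, ofReal_form A B hA, point_form B C hB]
    by_cases hC : C = 0
    · subst hC
      exact absurd hfor fun h => C_ne_zero T hT _ _ h
    · exact backward_formula T _ _ C hC hfor
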